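/- Let Π₁ = A^{-1}([-ε,ε]^3) where A is the explicit 3×3 matrix with columns a₁ = (ε/√3, ε/√3, -2ε/√3), a₂ = (2ε/√3, -ε/√3, -ε/√3), a₃ = (1/(3ε²), 1/(3ε²), 1/(3ε²)), and 0 < ε ≤ 1/2. Then the first successive minimum of the cube [-ε,ε]^3 with respect to the lattice Λ₁ = Aℤ^3 equals 2/√3. -/

import Mathlib

open Matrix
open scoped BigOperators Pointwise

/-- The first successive minimum of a set `M ⊆ ℝ³` with respect to the lattice
`Aℤ³`: the infimum of `μ > 0` such that `μM` contains a nonzero lattice point. -/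
noncomputable def firstMin (A : Matrix (Fin 3) (Fin 3) ℝ) (M : Set (Fin 3 → ℝ)) : ℝ :=
  sInf {μ : ℝ | 0 < μ ∧ ∃ x : Fin 3 → ℤ, x ≠ 0 ∧
    A.mulVec (fun i => (x i : ℝ)) ∈ μ • M}

/-- For `0 < ε ≤ 1/2` and the explicit matrix `A` with columns
`(ε/√3, ε/√3, -2ε/√3)`, `(2ε/√3, -ε/√3, -ε/√3)`, `(1/(3ε²), 1/(3ε²), 1/(3ε²))`,
the first successive minimum of the cube `[-ε,ε]³` with respect to the lattice
`Λ₁ = Aℤ³` equals `2/√3`. -/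
theorem stmt_14 (ε : ℝ) (hε0 : 0 < ε) (hε : ε ≤ 1/2) :
    firstMin
      !![ε / Real.sqrt 3,    2*ε / Real.sqrt 3, 1/(3*ε^2);
         ε / Real.sqrt 3,    -ε / Real.sqrt 3,  1/(3*ε^2);
         -2*ε / Real.sqrt 3, -ε / Real.sqrt 3,  1/(3*ε^2)]
      {z : Fin 3 → ℝ | ∀ i, |z i| ≤ ε} = 2 / Real.sqrt 3 := by
  unfold firstMin
  have h3 : (0:ℝ) < Real.sqrt 3 := Real.sqrt_pos.mpr (by norm_num)
  have hs2 : Real.sqrt 3 ^ 2 = 3 := Real.sq_sqrt (by norm_num)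
  set s := Real.sqrt 3 with hs
  have hs1 : (1:ℝ) ≤ s := by nlinarith
  have hεne : ε ≠ 0 := hε0.ne'
  have key : ∀ μ : ℝ, 0 < μ → ∀ v : Fin 3 → ℝ,
      (v ∈ μ • {z : Fin 3 → ℝ | ∀ i, |z i| ≤ ε} ↔ ∀ i, |v i| ≤ μ * ε) := by
    intro μ hμ v
    rw [Set.mem_smul_set_iff_inv_smul_mem₀ hμ.ne']
    simp only [Set.mem_setOf_eq, Pi.smul_apply, smul_eq_mul, abs_mul, abs_inv,
      abs_of_pos hμ]
    constructor
    · intro h i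
      have := h i
      calc |v i| = μ * (μ⁻¹ * |v i|) := by field_simp
        _ ≤ μ * ε := by nlinarith
    · intro h i
      have := h i
      calc μ⁻¹ * |v i| ≤ μ⁻¹ * (μ * ε) := by
            apply mul_le_mul_of_nonneg_left this (by positivity)
        _ = ε := by field_simp
  have hmemS : (2/s) ∈ {μ : ℝ | 0 < μ ∧ ∃ x : Fin 3 → ℤ, x ≠ 0 ∧
      (!![ε / s, 2*ε / s, 1/(3*ε^2);
          ε / s, -ε / s,  1/(3*ε^2);
          -2*ε / s, -ε / s, 1/(3*ε^2)]).mulVec (fun i => (x i : ℝ))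
        ∈ (2/s) • {z : Fin 3 → ℝ | ∀ i, |z i| ≤ ε}} := by
    refine ⟨by positivity, ![1,0,0], ?_, ?_⟩
    · intro h
      simpa using congrFun h 0
    · rw [key _ (by positivity)]
      intro i
      fin_cases i <;>
        simp only [Matrix.mulVec, dotProduct, Fin.sum_univ_three] <;>
        simp [Matrix.mulVec, dotProduct, Fin.sum_univ_three] <;>
        first
        | · rw [abs_of_nonneg (by positivity : (0:ℝ) ≤ ε/s),
              show (2:ℝ)/s*ε = ε/s + ε/s by ring]
            linarith [div_nonneg hε0.le h3.le]
        | · rw [neg_div, abs_neg, abs_of_nonneg (by positivity : (0:ℝ) ≤ 2*ε/s)]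
            apply le_of_eq; ring
  refine le_antisymm (csInf_le ⟨0, fun μ hμ => hμ.1.le⟩ hmemS) (le_csInf ⟨_, hmemS⟩ ?_)
  rintro μ ⟨hμ, x, hx, hmem⟩
  rw [key μ hμ] at hmem
  have h0 := hmem 0
  have h1 := hmem 1
  have h2 := hmem 2
  simp only [Matrix.mulVec, dotProduct, Fin.sum_univ_three,
    Matrix.cons_val', Matrix.cons_val_zero, Matrix.cons_val_one, Matrix.head_cons,
    Matrix.empty_val', Matrix.cons_val_fin_one, Matrix.head_fin_const,
    Matrix.cons_val_two, Matrix.tail_cons, Matrix.of_apply] at h0 h1 h2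
  by_contra hlt
  push_neg at hlt
  have hμs : μ * s < 2 := (lt_div_iff₀ h3).mp hlt
  by_cases hr : x 2 = 0
  · -- r = 0 case
    rw [hr] at h0 h1 h2
    rw [show ε / s * ((x 0 : ℤ) : ℝ) + 2*ε/s * ((x 1 : ℤ) : ℝ) + 1/(3*ε^2) * ((0:ℤ):ℝ) = (ε/s) * (((x 0 + 2 * x 1 : ℤ)):ℝ) by
        push_cast; ring, abs_mul, abs_of_pos (by positivity : (0:ℝ) < ε/s)] at h0
    rw [show ε / s * ((x 0 : ℤ) : ℝ) + -ε/s * ((x 1 : ℤ) : ℝ) + 1/(3*ε^2) * ((0:ℤ):ℝ) = (ε/s) * (((x 0 - x 1 : ℤ)):ℝ) by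
        push_cast; ring, abs_mul, abs_of_pos (by positivity : (0:ℝ) < ε/s)] at h1
    rw [show -2*ε / s * ((x 0 : ℤ) : ℝ) + -ε/s * ((x 1 : ℤ) : ℝ) + 1/(3*ε^2) * ((0:ℤ):ℝ) = (ε/s) * (-(((2 * x 0 + x 1 : ℤ)):ℝ)) by
        push_cast; ring, abs_mul, abs_of_pos (by positivity : (0:ℝ) < ε/s), abs_neg] at h2
    have bound : ∀ X : ℝ, (ε/s) * |X| ≤ μ * ε → |X| < 2 := by
      intro X hX
      have : |X| ≤ μ * s := by
        calc |X| = ((ε/s) * |X|) * (s/ε) := by field_simp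
          _ ≤ (μ*ε) * (s/ε) := mul_le_mul_of_nonneg_right hX (by positivity)
          _ = μ * s := by field_simp
      linarith
    have b0 := bound _ h0
    have b1 := bound _ h1
    have b2 := bound _ h2
    rw [← Int.cast_abs] at b0 b1 b2
    have i0 : |x 0 + 2 * x 1| < 2 := by exact_mod_cast b0
    have i1 : |x 0 - x 1| < 2 := by exact_mod_cast b1
    have i2 : |2 * x 0 + x 1| < 2 := by exact_mod_cast b2
    rw [abs_lt] at i0 i1 i2
    have hx0 : x 0 = 0 := by omega
    have hx1 : x 1 = 0 := by omega
    exact hx (funext fun i => by fin_cases i <;> simp [hx0, hx1, hr])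
  · -- r ≠ 0 case
    have hr1 : (1:ℝ) ≤ |((x 2 : ℤ) : ℝ)| := by
      have : 1 ≤ |x 2| := Int.one_le_abs hr
      exact_mod_cast this
    set p := ((x 0 : ℤ) : ℝ)
    set q := ((x 1 : ℤ) : ℝ)
    set r := ((x 2 : ℤ) : ℝ)
    have hsum : (ε / s * p + 2*ε/s * q + 1/(3*ε^2) * r)
        + (ε / s * p + -ε/s * q + 1/(3*ε^2) * r)
        + (-2*ε / s * p + -ε/s * q + 1/(3*ε^2) * r) = r / ε^2 := by
      field_simp
      ring
    have htri : |r / ε^2| ≤ 3 * (μ * ε) := by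
      rw [← hsum]
      have := abs_add_three (ε / s * p + 2*ε/s * q + 1/(3*ε^2) * r)
        (ε / s * p + -ε/s * q + 1/(3*ε^2) * r)
        (-2*ε / s * p + -ε/s * q + 1/(3*ε^2) * r)
      linarith
    rw [abs_div, abs_of_pos (by positivity : (0:ℝ) < ε^2)] at htri
    have hkey : 1 / ε^2 ≤ 3 * (μ * ε) := by
      calc 1 / ε^2 ≤ |r| / ε^2 := by gcongr
        _ ≤ 3 * (μ * ε) := htri
    have h1ε : 1 ≤ 3 * μ * ε^3 := by
      have := mul_le_mul_of_nonneg_right hkey (le_of_lt (by positivity : (0:ℝ) < ε^2))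
      field_simp at this
      nlinarith
    have hε3 : ε^3 ≤ (1/2)^3 := pow_le_pow_left₀ hε0.le hε 3
    have hμbig : 8/3 ≤ μ := by nlinarith [mul_nonneg hμ.le (sub_nonneg.mpr hε3)]
    have : μ < 2 := by nlinarith
    linarith
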